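/- Fix $\nu > 0$ and $x > 0$, and suppose $\theta_* \in \mathbb{R}$ and $x_* \geq 1$ solve the system $x_* = \int_{\mathbb{X}} e^{\theta_* + (x_*-1)H(a)} q(da)$ and $\frac{x}{\nu} = x_* + \frac{x}{\nu} \int_{\mathbb{X}} H(a) e^{\theta_* + (x_*-1)H(a)} q(da)$. Then the infimum over all probability measures $\hat{q} \ll q$ with finite relative entropy of $x \int_{\mathbb{X}} H\, d\hat{q} + \nu - x + x \log\left(\frac{x}{x\int_{\mathbb{X}} H\, d\hat{q} + \nu}\right) + x\, D(\hat{q}\|q)$ equals $\theta_* x - \nu(x_* - 1)$, and it is attained at the tilted measure $dq_* = \frac{e^{(x_*-1)H(a)}}{\int_{\mathbb{X}} e^{(x_*-1)H(b)} q(db)}\, dq$. -/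

import Mathlib

open MeasureTheory Filter Set

/-- the variational formula for the rate function. If `(θ_*, x_*)` solves
`x_* = ∫ e^{θ_* + (x_*-1)H} dq` and `x/ν = x_* + (x/ν) ∫ H e^{θ_* + (x_*-1)H} dq`,
then the infimum over probability measures `q̂ ≪ q` with finite relative entropy of
`x ∫ H dq̂ + ν - x + x log (x / (x ∫ H dq̂ + ν)) + x D(q̂‖q)`
equals `θ_* x - ν (x_* - 1)`, attained at the tilted measure
`dq_* = e^{(x_*-1)H} / (∫ e^{(x_*-1)H} dq) dq`. -/
lemma kl_nonneg' {X : Type*} [MeasurableSpace X] (μ ν : Measure X)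
    [IsProbabilityMeasure μ] [IsProbabilityMeasure ν] (h : μ ≪ ν)
    (hint : Integrable (llr μ ν) μ) : 0 ≤ ∫ a, llr μ ν a ∂μ := by
  have hg_int : Integrable (fun a => (ν.rnDeriv μ a).toReal) μ :=
    Measure.integrable_toReal_rnDeriv
  have hbound : ∀ᵐ a ∂μ, -llr μ ν a ≤ (ν.rnDeriv μ a).toReal - 1 := by
    filter_upwards [Measure.inv_rnDeriv h, h.ae_le (Measure.rnDeriv_lt_top μ ν),
      Measure.rnDeriv_pos h] with a h1 h2 h3
    have hpos : 0 < ((ν.rnDeriv μ) a).toReal := by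
      rw [← h1]
      simp only [Pi.inv_apply, ENNReal.toReal_inv]
      exact inv_pos.mpr (ENNReal.toReal_pos h3.ne' h2.ne)
    have heqlog : -llr μ ν a = Real.log ((ν.rnDeriv μ a).toReal) := by
      rw [llr, ← Real.log_inv, ← h1]
      simp [ENNReal.toReal_inv]
    rw [heqlog]
    linarith [Real.log_le_sub_one_of_pos hpos]
  have hmono := integral_mono_ae hint.neg (hg_int.sub (integrable_const 1)) hbound
  simp only [Pi.neg_apply, Pi.sub_apply] at hmono
  rw [integral_neg, integral_sub hg_int (integrable_const 1)] at hmono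
  have hle : ∫ a, (ν.rnDeriv μ a).toReal ∂μ ≤ (ν Set.univ).toReal := by
    rw [← setIntegral_univ]
    exact Measure.setIntegral_toReal_rnDeriv_le (measure_ne_top ν Set.univ)
  simp only [integral_const, measure_univ, probReal_univ, ENNReal.toReal_one, smul_eq_mul, one_mul] at hmono
  simp only [measure_univ, ENNReal.toReal_one] at hle
  linarith

theorem stmt_6 {X : Type*} [MeasurableSpace X] (q : Measure X) [IsProbabilityMeasure q]
    (H : X → ℝ) (hHmeas : Measurable H) (hHnonneg : ∀ a, 0 ≤ H a)
    (hHmean : ∫ a, H a ∂q < 1)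
    (hint : ∀ x : ℝ, Integrable (fun a => Real.exp (x * H a)) q)
    (ν x : ℝ) (hν : 0 < ν) (hx : 0 < x)
    (θs xs : ℝ) (hxs : 1 ≤ xs)
    (heq1 : xs = ∫ a, Real.exp (θs + (xs - 1) * H a) ∂q)
    (heq2 : x / ν = xs + x / ν * ∫ a, H a * Real.exp (θs + (xs - 1) * H a) ∂q) :
    IsLeast {y : ℝ | ∃ qh : Measure X, IsProbabilityMeasure qh ∧ qh ≪ q ∧
        Integrable (fun a => Real.log ((qh.rnDeriv q a).toReal)) qh ∧
        Integrable H qh ∧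
        y = x * (∫ a, H a ∂qh) + ν - x
            + x * Real.log (x / (x * (∫ a, H a ∂qh) + ν))
            + x * ∫ a, Real.log ((qh.rnDeriv q a).toReal) ∂qh}
      (θs * x - ν * (xs - 1)) ∧
    ∀ qstar : Measure X,
      qstar = q.withDensity (fun a =>
        ENNReal.ofReal (Real.exp ((xs - 1) * H a) / ∫ b, Real.exp ((xs - 1) * H b) ∂q)) →
      x * (∫ a, H a ∂qstar) + ν - x
          + x * Real.log (x / (x * (∫ a, H a ∂qstar) + ν))
          + x * ∫ a, Real.log ((qstar.rnDeriv q a).toReal) ∂qstar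
        = θs * x - ν * (xs - 1) := by
  have hfint : Integrable (fun a => Real.exp ((xs - 1) * H a)) q := hint (xs - 1)
  set Z : ℝ := ∫ a, Real.exp ((xs - 1) * H a) ∂q with hZdef
  have hZpos : 0 < Z := integral_exp_pos hfint
  have hxspos : (0:ℝ) < xs := lt_of_lt_of_le one_pos hxs
  -- reformulate heq1
  have hxsZ : xs = Real.exp θs * Z := by
    rw [heq1]
    simp_rw [Real.exp_add]
    rw [integral_const_mul, ← hZdef]
  have hθs : θs = Real.log xs - Real.log Z := by
    have h := congrArg Real.log hxsZ
    rw [Real.log_mul (Real.exp_pos θs).ne' hZpos.ne', Real.log_exp] at h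
    linarith
  -- the quantity J
  set J : ℝ := ∫ a, H a * Real.exp ((xs - 1) * H a) ∂q with hJdef
  have hJint : Integrable (fun a => H a * Real.exp ((xs - 1) * H a)) q := by
    refine (hint xs).mono
      ((hHmeas.mul ((hHmeas.const_mul (xs - 1)).exp)).aestronglyMeasurable)
      (ae_of_all _ fun a => ?_)
    have h0 : 0 ≤ H a := hHnonneg a
    rw [Real.norm_eq_abs, Real.norm_eq_abs, abs_of_nonneg (by positivity),
      abs_of_nonneg (Real.exp_pos _).le]
    have hHe : H a ≤ Real.exp (H a) := by
      have := Real.add_one_le_exp (H a); linarith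
    calc H a * Real.exp ((xs - 1) * H a)
        ≤ Real.exp (H a) * Real.exp ((xs - 1) * H a) :=
          mul_le_mul_of_nonneg_right hHe (Real.exp_pos _).le
      _ = Real.exp (xs * H a) := by rw [← Real.exp_add]; congr 1; ring
  have hJnonneg : 0 ≤ J := integral_nonneg fun a =>
    mul_nonneg (hHnonneg a) (Real.exp_pos _).le
  -- reformulate heq2
  have heq2' : x / ν = xs + x / ν * (Real.exp θs * J) := by
    rw [heq2]
    congr 2
    simp_rw [Real.exp_add, mul_left_comm (H _)]
    rw [integral_const_mul, ← hJdef]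
  have hexpθ : Real.exp θs = xs / Z := (eq_div_iff hZpos.ne').mpr hxsZ.symm
  have keyeq : x * (J / Z) + ν = x / xs := by
    rw [hexpθ] at heq2'
    field_simp at heq2' ⊢
    nlinarith [heq2']
  -- the tilted measure
  set Q : Measure X := q.tilted (fun a => (xs - 1) * H a) with hQdef
  haveI hprobQ : IsProbabilityMeasure Q := isProbabilityMeasure_tilted hfint
  have hQac : Q ≪ q := tilted_absolutelyContinuous q _
  have hacQ : q ≪ Q := absolutelyContinuous_tilted hfint
  have hHQ_int : Integrable H Q := by
    rw [hQdef, Measure.tilted]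
    rw [integrable_withDensity_iff
      (((hHmeas.const_mul (xs - 1)).exp.div_const _).ennreal_ofReal)
      (ae_of_all _ fun a => ENNReal.ofReal_lt_top)]
    refine ((hJint.div_const Z).congr (ae_of_all _ fun a => ?_))
    simp only
    rw [ENNReal.toReal_ofReal (by positivity), ← hZdef]
    ring
  have hHQ : ∫ a, H a ∂Q = J / Z := by
    rw [hQdef, integral_tilted]
    simp only [smul_eq_mul]
    have hrw : ∀ a, (Real.exp ((xs - 1) * H a) / ∫ b, Real.exp ((xs - 1) * H b) ∂q) * H a
        = (H a * Real.exp ((xs - 1) * H a)) / Z := fun a => by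
      rw [← hZdef]; ring
    simp_rw [hrw]
    rw [integral_div, ← hJdef]
  have hllrQ_ae : (fun a => Real.log ((Q.rnDeriv q a).toReal))
      =ᵐ[Q] fun a => (xs - 1) * H a - Real.log Z := by
    have h := log_rnDeriv_tilted_left_self (μ := q) (f := fun a => (xs - 1) * H a) hfint
    exact hQac.ae_le h
  have hllrQ_int : Integrable (fun a => Real.log ((Q.rnDeriv q a).toReal)) Q :=
    Integrable.congr ((hHQ_int.const_mul (xs - 1)).sub (integrable_const (Real.log Z)))
      hllrQ_ae.symm
  have hllrQ : ∫ a, Real.log ((Q.rnDeriv q a).toReal) ∂Q = (xs - 1) * (J / Z) - Real.log Z := by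
    rw [integral_congr_ae hllrQ_ae,
      integral_sub (hHQ_int.const_mul (xs - 1)) (integrable_const _),
      integral_const_mul, hHQ]
    simp [measure_univ]
  -- the value at the tilted measure
  have hval : x * (J / Z) + ν - x + x * Real.log (x / (x * (J / Z) + ν))
      + x * ((xs - 1) * (J / Z) - Real.log Z) = θs * x - ν * (xs - 1) := by
    have hxdiv : x / (x * (J / Z) + ν) = xs := by
      rw [keyeq]; field_simp
    rw [hxdiv, keyeq]
    have hmJ : x * (J / Z) = x / xs - ν := by linarith [keyeq]
    have hxx : (xs - 1) * (x / xs) = x - x / xs := by field_simp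
    linear_combination (-x) * hθs + (xs - 1) * hmJ + hxx
  refine ⟨⟨⟨Q, hprobQ, hQac, hllrQ_int, hHQ_int, by rw [hHQ, hllrQ]; exact hval.symm⟩, ?_⟩, ?_⟩
  · -- lower bound
    rintro y ⟨qh, hqhprob, hqhac, hqhllr, hqhH, rfl⟩
    set m : ℝ := ∫ a, H a ∂qh with hmdef
    set D : ℝ := ∫ a, Real.log ((qh.rnDeriv q a).toReal) ∂qh with hDdef
    have hm0 : 0 ≤ m := integral_nonneg fun a => hHnonneg a
    have hfqh : Integrable (fun a => (xs - 1) * H a) qh := hqhH.const_mul _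
    have hllr' : Integrable (llr qh q) qh := hqhllr
    have hDV0 : ∫ a, llr qh Q a ∂qh
        = ∫ a, llr qh q a ∂qh - ∫ a, (xs - 1) * H a ∂qh + Real.log Z := by
      rw [hQdef]
      exact integral_llr_tilted_right hqhac hfqh hfint hllr'
    have hintQ : Integrable (llr qh Q) qh := by
      rw [hQdef]
      exact integrable_llr_tilted_right hqhac hfqh hllr' hfint
    have hqhQ : qh ≪ Q := hqhac.trans hacQ
    have h0 := kl_nonneg' qh Q hqhQ hintQ
    rw [hDV0, integral_const_mul] at h0
    have hDeq : ∫ a, llr qh q a ∂qh = D := rfl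
    rw [hDeq, ← hmdef] at h0
    have hD : (xs - 1) * m - Real.log Z ≤ D := by linarith
    have hs : 0 < x * m + ν := by nlinarith
    have hss : 0 < x / xs := div_pos hx hxspos
    have hlog : Real.log (x * m + ν) ≤ Real.log (x / xs) + ((x * m + ν) - x / xs) * xs / x := by
      have h1 := Real.log_le_sub_one_of_pos (div_pos hs hss)
      rw [Real.log_div hs.ne' hss.ne'] at h1
      have h2 : (x * m + ν) / (x / xs) = (x * m + ν) * xs / x := by
        rw [div_div_eq_mul_div]
      have h4 : ((x * m + ν) - x / xs) * xs / x = (x * m + ν) * xs / x - 1 := by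
        field_simp
      rw [h2] at h1
      linarith
    rw [Real.log_div hx.ne' hs.ne']
    have hD' := mul_le_mul_of_nonneg_left hD hx.le
    have hlog' := mul_le_mul_of_nonneg_left hlog hx.le
    have hid1 : x * (Real.log (x / xs) + ((x * m + ν) - x / xs) * xs / x)
        = x * Real.log (x / xs) + xs * (x * m + ν) - x := by
      field_simp; ring
    have hid2 : x * Real.log (x / xs) = x * Real.log x - x * Real.log xs := by
      rw [Real.log_div hx.ne' hxspos.ne']; ring
    have e1 : x * ((xs - 1) * m - Real.log Z) = x * xs * m - x * m - x * Real.log Z := by ring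
    have e2 : xs * (x * m + ν) = x * xs * m + xs * ν := by ring
    have e3 : θs * x = x * Real.log xs - x * Real.log Z := by rw [hθs]; ring
    linarith [hD', hlog', hid1, hid2, e1, e2, e3]
  · -- attainment
    intro qstar hqstar
    have hq' : qstar = Q := by rw [hqstar, hQdef]; rfl
    rw [hq', hHQ, hllrQ]
    exact hval
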